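/- arXiv:0902.3298 — 2 statements merged into one kernel-verified Lean document; each statement's English description precedes it below -/
import Mathlib

section
/- Let a ≥ 2/π be a real number and define f_a(x) = ((a + √(1 + x²))·arctan x)/x for x > 0. Then f_a is strictly decreasing on (0, ∞). -/
open Real Set

lemma hasDerivAt_phi (θ : ℝ) :
    HasDerivAt (fun t : ℝ => 2*t + π*t*Real.cos t - 2*Real.sin t*Real.cos t - π*Real.sin t)
      (Real.sin θ * (4*Real.sin θ - π*θ)) θ := by
  have h1 : HasDerivAt (fun t : ℝ => 2*t) 2 θ := by
    simpa using (hasDerivAt_id θ).const_mul 2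
  have h2 : HasDerivAt (fun t : ℝ => π*t*Real.cos t) (π*Real.cos θ + π*θ*(-Real.sin θ)) θ := by
    have := ((hasDerivAt_id θ).const_mul π).mul (Real.hasDerivAt_cos θ)
    exact this.congr_deriv (by simp)
  have h3 : HasDerivAt (fun t : ℝ => 2*Real.sin t*Real.cos t)
      (2*Real.cos θ*Real.cos θ + 2*Real.sin θ*(-Real.sin θ)) θ := by
    have := ((Real.hasDerivAt_sin θ).const_mul 2).mul (Real.hasDerivAt_cos θ)
    exact this
  have h4 : HasDerivAt (fun t : ℝ => π*Real.sin t) (π*Real.cos θ) θ :=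
    (Real.hasDerivAt_sin θ).const_mul π
  have h := ((h1.add h2).sub h3).sub h4
  refine h.congr_deriv ?_
  have := Real.sin_sq_add_cos_sq θ
  nlinarith [this]

lemma phi_pos {θ : ℝ} (h0 : 0 < θ) (h1 : θ < π/2) :
    0 < 2*θ + π*θ*Real.cos θ - 2*Real.sin θ*Real.cos θ - π*Real.sin θ := by
  set φ : ℝ → ℝ := fun t => 2*t + π*t*Real.cos t - 2*Real.sin t*Real.cos t - π*Real.sin t with hφ
  have hcont : Continuous φ := by continuity
  have hpi2 : π/2 < π := by linarith [Real.pi_pos]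
  rcases le_or_gt 0 (4*Real.sin θ - π*θ) with hg | hg
  · -- φ strictly increasing on [0, θ]
    have mono : StrictMonoOn φ (Icc 0 θ) := by
      apply strictMonoOn_of_deriv_pos (convex_Icc 0 θ) hcont.continuousOn
      intro u hu
      rw [interior_Icc] at hu
      obtain ⟨hul, hur⟩ := hu
      rw [(hasDerivAt_phi u).deriv]
      have hsinu : 0 < Real.sin u := Real.sin_pos_of_pos_of_lt_pi hul (by linarith)
      have hconc := strictConcaveOn_sin_Icc.2 ⟨le_rfl, Real.pi_pos.le⟩
        ⟨h0.le, by linarith⟩ (by intro h; exact absurd h.symm (ne_of_gt h0))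
        (show (0:ℝ) < 1 - u/θ by rw [sub_pos]; exact (div_lt_one h0).mpr hur)
        (div_pos hul h0) (by ring)
      simp only [smul_eq_mul, Real.sin_zero, mul_zero, zero_add] at hconc
      rw [show u/θ * θ = u by field_simp] at hconc
      -- hconc : u/θ * sin θ < sin u
      have h2 : u * Real.sin θ < θ * Real.sin u := by
        rw [div_mul_eq_mul_div, div_lt_iff₀ h0] at hconc
        nlinarith [hconc]
      have key : 0 < 4*Real.sin u - π*u := by
        have h3 : 0 < θ * (4*Real.sin u - π*u) := by nlinarith [hg, h2, mul_pos hul h0]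
        by_contra hcon
        push_neg at hcon
        nlinarith [mul_nonneg h0.le (neg_nonneg.mpr hcon)]
      positivity
    have := mono ⟨le_rfl, h0.le⟩ ⟨h0.le, le_rfl⟩ h0
    have hφ0 : φ 0 = 0 := by simp [hφ]
    rw [hφ0] at this
    exact this
  · -- φ strictly decreasing on [θ, π/2]
    have anti : StrictAntiOn φ (Icc θ (π/2)) := by
      apply strictAntiOn_of_deriv_neg (convex_Icc θ (π/2)) hcont.continuousOn
      intro u hu
      rw [interior_Icc] at hu
      obtain ⟨hul, hur⟩ := hu
      rw [(hasDerivAt_phi u).deriv]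
      have hu0 : 0 < u := h0.trans hul
      have hsinu : 0 < Real.sin u := Real.sin_pos_of_pos_of_lt_pi hu0 (by linarith)
      have hconc := strictConcaveOn_sin_Icc.2 ⟨le_rfl, Real.pi_pos.le⟩
        ⟨hu0.le, by linarith⟩ (by intro h; exact absurd h.symm (ne_of_gt hu0))
        (show (0:ℝ) < 1 - θ/u by rw [sub_pos]; exact (div_lt_one hu0).mpr hul)
        (div_pos h0 hu0) (by ring)
      simp only [smul_eq_mul, Real.sin_zero, mul_zero, zero_add] at hconc
      rw [show θ/u * u = θ by field_simp] at hconc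
      -- hconc : θ/u * sin u < sin θ
      have h2 : θ * Real.sin u < u * Real.sin θ := by
        rw [div_mul_eq_mul_div, div_lt_iff₀ hu0] at hconc
        nlinarith [hconc]
      have key : 4*Real.sin u - π*u < 0 := by
        have h3 : θ * (4*Real.sin u - π*u) < 0 := by nlinarith [hg, h2]
        by_contra hcon
        push_neg at hcon
        nlinarith [mul_nonneg h0.le hcon]
      exact mul_neg_of_pos_of_neg hsinu key
    have := anti ⟨le_rfl, h1.le⟩ ⟨h1.le, le_rfl⟩ h1
    have hφpi2 : φ (π/2) = 0 := by
      simp [hφ, Real.cos_pi_div_two, Real.sin_pi_div_two]; ring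
    rw [hφpi2] at this
    exact this


lemma key_ineq {x : ℝ} (hx : 0 < x) :
    2*x + π * Real.sqrt (1+x^2) * x <
      Real.arctan x * (2*(1+x^2) + π * Real.sqrt (1+x^2)) := by
  have ht : 0 < Real.arctan x := by
    rw [← Real.arctan_zero]; exact Real.arctan_strictMono hx
  have hφ := phi_pos ht (Real.arctan_lt_pi_div_two x)
  rw [Real.cos_arctan x, Real.sin_arctan x] at hφ
  set t := Real.arctan x with htdef
  set s := Real.sqrt (1+x^2) with hsdef
  have hs2 : s^2 = 1+x^2 := Real.sq_sqrt (by positivity)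
  have hs0 : 0 < s := Real.sqrt_pos.mpr (by positivity)
  have h3 : 0 < (2*t + π*t*(1/s) - 2*(x/s)*(1/s) - π*(x/s)) * s^2 :=
    mul_pos hφ (by positivity)
  have h4 : (2*t + π*t*(1/s) - 2*(x/s)*(1/s) - π*(x/s)) * s^2
      = t*(2*(1+x^2) + π*s) - (2*x + π*s*x) := by
    rw [← hs2]; field_simp; ring
  rw [h4] at h3
  linarith

theorem shafer_f_strictAnti_of_ge (a : ℝ) (ha : a ≥ 2 / Real.pi) :
    StrictAntiOn (fun x : ℝ => ((a + Real.sqrt (1 + x ^ 2)) * Real.arctan x) / x)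
      (Set.Ioi (0 : ℝ)) := by
  have hπ : 0 < π := Real.pi_pos
  apply strictAntiOn_of_deriv_neg (convex_Ioi 0)
  · apply ContinuousOn.div
    · exact (Continuous.continuousOn (by continuity))
    · exact continuousOn_id
    · intro x hx; exact ne_of_gt hx
  · intro x hx
    rw [interior_Ioi] at hx
    have hx : (0:ℝ) < x := hx
    set s := Real.sqrt (1+x^2) with hsdef
    have hs2 : s^2 = 1+x^2 := Real.sq_sqrt (by positivity)
    have hs1 : 1 ≤ s := by
      rw [hsdef]
      nlinarith [Real.sq_sqrt (show (0:ℝ) ≤ 1+x^2 by positivity), Real.sqrt_nonneg (1+x^2), sq_nonneg x]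
    have hs0 : 0 < s := lt_of_lt_of_le one_pos hs1
    have ht : 0 < Real.arctan x := by
      rw [← Real.arctan_zero]
      exact Real.arctan_strictMono hx
    set t := Real.arctan x with htdef
    -- derivative computation
    have h1 : HasDerivAt (fun y : ℝ => 1 + y^2) (2*x) x := by
      simpa using ((hasDerivAt_pow 2 x).const_add 1)
    have hsq : HasDerivAt (fun y : ℝ => Real.sqrt (1+y^2)) (2*x / (2*s)) x :=
      h1.sqrt (by positivity)
    have hnum : HasDerivAt (fun y : ℝ => (a + Real.sqrt (1+y^2)) * Real.arctan y)
        ((2*x/(2*s)) * t + (a+s) * (1/(1+x^2))) x :=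
      (hsq.const_add a).mul (Real.hasDerivAt_arctan x)
    have hdiv : HasDerivAt (fun y : ℝ => ((a + Real.sqrt (1+y^2)) * Real.arctan y) / y)
        ((((2*x/(2*s)) * t + (a+s) * (1/(1+x^2))) * x - ((a+s)*t) * 1) / x^2) x :=
      hnum.div (hasDerivAt_id x) (ne_of_gt hx)
    rw [hdiv.deriv]
    apply div_neg_of_neg_of_pos _ (by positivity)
    -- numerator negative
    have haπ : 2 ≤ a * π := by
      rw [ge_iff_le, div_le_iff₀ hπ] at ha
      linarith
    have K := key_ineq hx
    rw [← htdef, ← hsdef] at K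
    have hK' : 2*x + π*s*x < t*(2*s^2 + π*s) := by
      rw [hs2]; exact K
    have hts : x < t * s^2 := by
      by_contra hcon
      push_neg at hcon
      have h6 : t ≤ x := by nlinarith [mul_nonneg ht.le (show (0:ℝ) ≤ s^2 - 1 by nlinarith)]
      have h7 : 0 ≤ π * s * (x - t) := by
        apply mul_nonneg (by positivity)
        linarith
      nlinarith [hK', hcon, h7]
    have main : 0 < a * (t*s^2 - x) - s*(x - t) := by
      have h5 : 0 ≤ (a*π - 2) * (t*s^2 - x) :=
        mul_nonneg (by linarith) (by linarith)
      by_contra hcon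
      push_neg at hcon
      have h8 : π * (a*(t*s^2-x) - s*(x-t)) ≤ 0 :=
        mul_nonpos_of_nonneg_of_nonpos hπ.le hcon
      nlinarith [hK', h5, h8]
    have hrw : ((2*x/(2*s)) * t + (a+s) * (1/(1+x^2))) * x - ((a+s)*t) * 1
        = (-(a * (t*s^2 - x) - s*(x - t))) / s^2 := by
      rw [← hs2]
      field_simp
      linear_combination (-s*t) * hs2
    rw [hrw]
    apply div_neg_of_neg_of_pos (by linarith) (by positivity)
end

section
/- Let a be a real number with a ≤ −1 or a ≥ √2/2, and define g_a(x) = (x + x³ + a·x·√(1 + x²))/((1 + x²)(1 + a·√(1 + x²))) − arctan x for x > 0. Then g_a is strictly decreasing on (0, ∞), and consequently g_a(x) < 0 for all x > 0. -/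
private lemma shafer_sqrt_deriv {x : ℝ} :
    HasDerivAt (fun y : ℝ => Real.sqrt (1 + y ^ 2)) (x / Real.sqrt (1 + x ^ 2)) x := by
  have h1 : HasDerivAt (fun y : ℝ => 1 + y ^ 2) (2 * x) x := by
    simpa using (hasDerivAt_pow 2 x).const_add 1
  have h2 := h1.sqrt (by positivity)
  convert h2 using 1
  have : Real.sqrt (1 + x ^ 2) ≠ 0 := by positivity
  field_simp

private lemma shafer_deriv (a : ℝ) (ha : a ≤ -1 ∨ a ≥ Real.sqrt 2 / 2) {x : ℝ} (hx : 0 < x) :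
    ∃ d, HasDerivAt
      (fun x : ℝ => (x + x ^ 3 + a * x * Real.sqrt (1 + x ^ 2)) /
        ((1 + x ^ 2) * (1 + a * Real.sqrt (1 + x ^ 2))) - Real.arctan x) d x ∧ d < 0 := by
  set s := Real.sqrt (1 + x ^ 2) with hs
  have hspos : 0 < s := by positivity
  have hs2 : s ^ 2 = 1 + x ^ 2 := Real.sq_sqrt (by positivity)
  have hs1 : 1 < s := by nlinarith [hs2, sq_nonneg s]
  have hK : 0 < a + (2 * a ^ 2 - 1) * s := by
    rcases ha with h | h
    · have h1 : (0:ℝ) ≤ (1 - 2 * a) * (-(a + 1)) :=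
        mul_nonneg (by nlinarith) (by linarith)
      have h2 : (0:ℝ) < (2 * a ^ 2 - 1) * (s - 1) :=
        mul_pos (by nlinarith) (by linarith)
      nlinarith
    · have h2 : Real.sqrt 2 ^ 2 = 2 := Real.sq_sqrt (by norm_num)
      have hs2pos : (0:ℝ) < Real.sqrt 2 := by positivity
      have hapos : 0 < a := lt_of_lt_of_le (by positivity) h
      have h2a : (0:ℝ) ≤ 2 * a ^ 2 - 1 := by
        nlinarith [sq_nonneg (a - Real.sqrt 2 / 2), mul_nonneg hs2pos.le (sub_nonneg.2 h)]
      nlinarith [mul_nonneg h2a hspos.le]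
  have hden : 1 + a * s ≠ 0 := by
    rcases ha with h | h
    · have : a * s ≤ -1 * s := mul_le_mul_of_nonneg_right h hspos.le
      intro hc; nlinarith
    · have hapos : 0 < a := lt_of_lt_of_le (by positivity) h
      intro hc; nlinarith [mul_pos hapos hspos]
  have hD : (1 + x ^ 2) * (1 + a * s) ≠ 0 := by
    intro hc
    rcases mul_eq_zero.1 hc with h | h
    · nlinarith
    · exact hden h
  have hNum : HasDerivAt (fun y : ℝ => y + y ^ 3 + a * y * Real.sqrt (1 + y ^ 2))
      (1 + 3 * x ^ 2 + (a * (x / s) * x + a * s)) x := by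
    have h1 : HasDerivAt (fun y : ℝ => y + y ^ 3) (1 + 3 * x ^ 2) x := by
      exact ((hasDerivAt_id' x).add (hasDerivAt_pow 3 x)).congr_deriv (by norm_num)
    have h2 : HasDerivAt (fun y : ℝ => a * y * Real.sqrt (1 + y ^ 2))
        ((a * 1) * s + (a * x) * (x / s)) x := by
      have ha1 : HasDerivAt (fun y : ℝ => a * y) (a * 1) x := (hasDerivAt_id x).const_mul a
      exact ha1.mul shafer_sqrt_deriv
    exact (h1.add h2).congr_deriv (by ring)
  have hDen : HasDerivAt (fun y : ℝ => (1 + y ^ 2) * (1 + a * Real.sqrt (1 + y ^ 2)))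
      (2 * x * (1 + a * s) + (1 + x ^ 2) * (a * (x / s))) x := by
    have h1 : HasDerivAt (fun y : ℝ => 1 + y ^ 2) (2 * x) x := by
      simpa using (hasDerivAt_pow 2 x).const_add 1
    have h2 : HasDerivAt (fun y : ℝ => 1 + a * Real.sqrt (1 + y ^ 2)) (a * (x / s)) x :=
      (shafer_sqrt_deriv.const_mul a).const_add 1
    exact h1.mul h2
  have hdiv := hNum.div hDen hD
  have hF := hdiv.sub (Real.hasDerivAt_arctan x)
  refine ⟨_, hF, ?_⟩
  rw [sub_neg]
  rw [div_lt_div_iff₀ (by positivity) (by positivity : (0:ℝ) < 1 + x ^ 2)]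
  rw [← mul_lt_mul_iff_left₀ hspos]
  have hiden : ((1 + 3 * x ^ 2 + (a * (x / s) * x + a * s)) * ((1 + x ^ 2) * (1 + a * s)) -
      (x + x ^ 3 + a * x * s) * (2 * x * (1 + a * s) + (1 + x ^ 2) * (a * (x / s)))) *
      (1 + x ^ 2) * s
      = 1 * ((1 + x ^ 2) * (1 + a * s)) ^ 2 * s
        - x ^ 2 * (1 + x ^ 2) ^ 2 * (a + (2 * a ^ 2 - 1) * s) := by
    have hsne : s ≠ 0 := ne_of_gt hspos
    field_simp
    ring_nf
    linear_combination (-(a * x ^ 2) + a * x ^ 6 - 2 * a ^ 2 * x ^ 2 * s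
      - 2 * a ^ 2 * x ^ 4 * s + a * x ^ 4 - a * x ^ 6 + 2 * a ^ 2 * x ^ 4 * s) * hs2
  rw [hiden]
  have : 0 < x ^ 2 * (1 + x ^ 2) ^ 2 * (a + (2 * a ^ 2 - 1) * s) := by positivity
  linarith

private lemma shafer_tendsto (a : ℝ) :
    Filter.Tendsto
      (fun x : ℝ => (x + x ^ 3 + a * x * Real.sqrt (1 + x ^ 2)) /
        ((1 + x ^ 2) * (1 + a * Real.sqrt (1 + x ^ 2))) - Real.arctan x)
      (nhdsWithin 0 (Set.Ioi 0)) (nhds 0) := by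
  by_cases hA : a = -1
  · subst hA
    have heq : ∀ y ∈ Set.Ioi (0:ℝ),
        -(y / Real.sqrt (1 + y ^ 2)) - Real.arctan y
          = (y + y ^ 3 + (-1) * y * Real.sqrt (1 + y ^ 2)) /
            ((1 + y ^ 2) * (1 + (-1) * Real.sqrt (1 + y ^ 2))) - Real.arctan y := by
      intro y hy
      have hy0 : (0:ℝ) < y := hy
      set s := Real.sqrt (1 + y ^ 2) with hs
      have hspos : 0 < s := by positivity
      have hs2 : s ^ 2 = 1 + y ^ 2 := Real.sq_sqrt (by positivity)
      have hs1 : 1 < s := by nlinarith [hs2, sq_nonneg s]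
      have h1 : (1:ℝ) + (-1) * s ≠ 0 := by intro hc; nlinarith
      have h2 : (1:ℝ) + y ^ 2 ≠ 0 := by positivity
      have hsne : s ≠ 0 := ne_of_gt hspos
      rw [sub_left_inj]
      rw [eq_div_iff (mul_ne_zero h2 h1)]
      field_simp
      linear_combination hs2
    have hG : Filter.Tendsto (fun y : ℝ => -(y / Real.sqrt (1 + y ^ 2)) - Real.arctan y)
        (nhdsWithin 0 (Set.Ioi 0)) (nhds 0) := by
      have hc : ContinuousAt (fun y : ℝ => -(y / Real.sqrt (1 + y ^ 2)) - Real.arctan y) 0 := by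
        apply ContinuousAt.sub
        · apply ContinuousAt.neg
          apply ContinuousAt.div
          · exact continuous_id.continuousAt
          · exact ((continuous_const.add (continuous_pow 2)).sqrt).continuousAt
          · simp
        · exact Real.continuous_arctan.continuousAt
      have := hc.tendsto.mono_left (nhdsWithin_le_nhds (s := Set.Ioi (0:ℝ)))
      simpa using this
    exact hG.congr' (Filter.eventuallyEq_of_mem self_mem_nhdsWithin heq)
  · have hden0 : (1 + (0:ℝ) ^ 2) * (1 + a * Real.sqrt (1 + (0:ℝ) ^ 2)) ≠ 0 := by
      simp only [ne_eq]
      norm_num [Real.sqrt_one]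
      intro hc
      exact hA (by linarith)
    have hc : ContinuousAt (fun x : ℝ => (x + x ^ 3 + a * x * Real.sqrt (1 + x ^ 2)) /
        ((1 + x ^ 2) * (1 + a * Real.sqrt (1 + x ^ 2))) - Real.arctan x) 0 := by
      apply ContinuousAt.sub
      · apply ContinuousAt.div
        · fun_prop
        · fun_prop
        · exact hden0
      · exact Real.continuous_arctan.continuousAt
    have := hc.tendsto.mono_left (nhdsWithin_le_nhds (s := Set.Ioi (0:ℝ)))
    simpa using this

theorem shafer_g_strictAnti_and_neg (a : ℝ) (ha : a ≤ -1 ∨ a ≥ Real.sqrt 2 / 2) :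
    StrictAntiOn
      (fun x : ℝ => (x + x ^ 3 + a * x * Real.sqrt (1 + x ^ 2)) /
        ((1 + x ^ 2) * (1 + a * Real.sqrt (1 + x ^ 2))) - Real.arctan x)
      (Set.Ioi (0 : ℝ)) ∧
    ∀ x : ℝ, 0 < x →
      (x + x ^ 3 + a * x * Real.sqrt (1 + x ^ 2)) /
        ((1 + x ^ 2) * (1 + a * Real.sqrt (1 + x ^ 2))) - Real.arctan x < 0 := by
  set F := fun x : ℝ => (x + x ^ 3 + a * x * Real.sqrt (1 + x ^ 2)) /
      ((1 + x ^ 2) * (1 + a * Real.sqrt (1 + x ^ 2))) - Real.arctan x with hF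
  have hanti : StrictAntiOn F (Set.Ioi 0) := by
    apply strictAntiOn_of_deriv_neg (convex_Ioi 0)
    · intro y hy
      exact ((shafer_deriv a ha hy).choose_spec.1.differentiableAt.continuousAt).continuousWithinAt
    · intro y hy
      rw [interior_Ioi] at hy
      obtain ⟨d, hd, hdneg⟩ := shafer_deriv a ha hy
      rw [hd.deriv]
      exact hdneg
  refine ⟨hanti, fun x hx => ?_⟩
  have hhalf : (0:ℝ) < x / 2 := by linarith
  have h1 : F (x / 2) ≤ 0 := by
    refine ge_of_tendsto (shafer_tendsto a) ?_
    filter_upwards [Ioo_mem_nhdsGT_of_mem (Set.mem_Ico.mpr ⟨le_refl 0, hhalf⟩)] with y hy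
    exact (hanti (Set.mem_Ioi.mpr hy.1) (Set.mem_Ioi.mpr hhalf) hy.2).le
  have h2 : F x < F (x / 2) := hanti (Set.mem_Ioi.mpr hhalf) (Set.mem_Ioi.mpr hx) (by linarith)
  have : F x < 0 := lt_of_lt_of_le h2 h1
  exact this
end
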